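/- In a bipartite graph G between n+1 agents and n rooms, suppose there is a nonnegative edge weight function w such that the weight adjacent to each agent equals 1/(n+1) and the weight adjacent to each room equals 1/n. Then for any agent i, the graph obtained by deleting i admits a perfect matching between the remaining n agents and the n rooms. -/

import Mathlib

/-- Extra agent version: n+1 agents, n rooms, balanced weights
(1/(n+1) at each agent, 1/n at each room). Then after deleting any agent i,
there is a perfect matching between the remaining n agents and the n rooms. -/
theorem extra_agent_matching (n : ℕ) (hn : 1 ≤ n)
    (adj : Fin (n + 1) → Fin n → Prop)
    (w : Fin (n + 1) → Fin n → ℝ)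
    (hw0 : ∀ i j, 0 ≤ w i j)
    (hsupp : ∀ i j, w i j ≠ 0 → adj i j)
    (hrow : ∀ i, ∑ j, w i j = 1 / (n + 1 : ℝ))
    (hcol : ∀ j, ∑ i, w i j = 1 / (n : ℝ)) :
    ∀ i₀ : Fin (n + 1), ∃ f : Fin n → Fin (n + 1),
      Function.Injective f ∧ (∀ j, f j ≠ i₀) ∧ ∀ j, adj (f j) j := by
  classical
  intro i₀
  set t : Fin n → Finset (Fin (n + 1)) :=
    fun j => Finset.univ.filter (fun i => adj i j ∧ i ≠ i₀) with ht
  have hall : ∀ s : Finset (Fin n), s.card ≤ (s.biUnion t).card := by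
    intro s
    rcases s.eq_empty_or_nonempty with rfl | hs
    · simp
    set T := s.biUnion t
    have hnpos : (0:ℝ) < n := by exact_mod_cast hn
    have hnp1 : (0:ℝ) < (n:ℝ) + 1 := by positivity
    -- total weight on columns in s
    have htot : ∑ j ∈ s, ∑ i, w i j = s.card / n := by
      rw [Finset.sum_congr rfl (fun j _ => hcol j)]
      simp [div_eq_mul_inv]
    -- split each column sum
    have hsplit : ∀ j ∈ s, ∑ i, w i j ≤ w i₀ j + ∑ i ∈ T, w i j := by
      intro j hj
      have : ∑ i, w i j = ∑ i ∈ insert i₀ T, w i j + ∑ i ∈ (insert i₀ T)ᶜ, w i j := by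
        rw [Finset.sum_add_sum_compl]
      have hz : ∑ i ∈ (insert i₀ T)ᶜ, w i j = 0 := by
        apply Finset.sum_eq_zero
        intro i hi
        simp only [Finset.mem_compl, Finset.mem_insert, not_or] at hi
        by_contra hne
        have hadj := hsupp i j hne
        exact hi.2 (Finset.mem_biUnion.mpr ⟨j, hj, by simp [ht, hadj, hi.1]⟩)
      rw [this, hz, add_zero]
      by_cases hi0 : i₀ ∈ T
      · rw [Finset.insert_eq_self.mpr hi0]
        have := hw0 i₀ j
        linarith
      · rw [Finset.sum_insert hi0]
    have h1 : (s.card : ℝ) / n ≤ ∑ j ∈ s, (w i₀ j + ∑ i ∈ T, w i j) := by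
      rw [← htot]
      exact Finset.sum_le_sum hsplit
    have h2 : ∑ j ∈ s, w i₀ j ≤ 1 / ((n:ℝ) + 1) := by
      rw [← hrow i₀]
      exact Finset.sum_le_sum_of_subset_of_nonneg (Finset.subset_univ s)
        (fun j _ _ => hw0 i₀ j)
    have h3 : ∑ j ∈ s, ∑ i ∈ T, w i j ≤ (T.card : ℝ) / ((n:ℝ) + 1) := by
      rw [Finset.sum_comm]
      have : ∀ i ∈ T, ∑ j ∈ s, w i j ≤ 1 / ((n:ℝ) + 1) := by
        intro i _
        rw [← hrow i]
        exact Finset.sum_le_sum_of_subset_of_nonneg (Finset.subset_univ s)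
          (fun j _ _ => hw0 i j)
      calc ∑ i ∈ T, ∑ j ∈ s, w i j ≤ ∑ _i ∈ T, 1 / ((n:ℝ) + 1) :=
            Finset.sum_le_sum this
        _ = (T.card : ℝ) / ((n:ℝ) + 1) := by
            rw [Finset.sum_const, nsmul_eq_mul]; ring
    have key : (s.card : ℝ) / n ≤ 1 / ((n:ℝ) + 1) + (T.card : ℝ) / ((n:ℝ) + 1) := by
      calc (s.card : ℝ) / n ≤ ∑ j ∈ s, (w i₀ j + ∑ i ∈ T, w i j) := h1
        _ = ∑ j ∈ s, w i₀ j + ∑ j ∈ s, ∑ i ∈ T, w i j := Finset.sum_add_distrib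
        _ ≤ 1 / ((n:ℝ) + 1) + (T.card : ℝ) / ((n:ℝ) + 1) := add_le_add h2 h3
    -- deduce cardinality inequality
    by_contra hlt
    push_neg at hlt
    have hT : (T.card : ℝ) ≤ (s.card : ℝ) - 1 := by
      have : T.card + 1 ≤ s.card := hlt
      have := (Nat.cast_le (α := ℝ)).mpr this
      push_cast at this ⊢
      linarith
    have hs1 : (1:ℝ) ≤ (s.card : ℝ) := by
      exact_mod_cast Nat.one_le_iff_ne_zero.mpr (Finset.card_ne_zero_of_mem hs.choose_spec)
    rw [← add_div, div_le_div_iff₀ hnpos hnp1] at key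
    nlinarith [key, hT, hs1, hnpos]
  obtain ⟨f, hinj, hmem⟩ :=
    (Finset.all_card_le_biUnion_card_iff_exists_injective t).mp hall
  refine ⟨f, hinj, ?_, ?_⟩
  · intro j
    have := hmem j
    simp [ht] at this
    exact this.2
  · intro j
    have := hmem j
    simp [ht] at this
    exact this.1
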